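/- (Bound on μ(z).) Let C = [[a,b],[c,d]] ∈ U(2) with abcd ≠ 0, Δ = ad − bc, λ(z) as defined, and r_0 ∈ (0,1) such that |λ(z)| < 1 for 0 < |z| < r_0. Set μ(z) = (dλ(z) − Δz)z/c. Then |μ(z)| < 1 for all z with 0 < |z| < min(|c|, r_0). -/

import Mathlib

/-!
The bound `|μ(z)| < 1` for `0 < |z| < min(|c|, r₀)`, where
`μ(z) = (dλ(z) - Δz)z/c`.
-/

noncomputable section

namespace QW

/-- `λ(z) = (Δz² + 1 - √(Δ²z⁴ + 2Δ(1-2|a|²)z² + 1)) / (2dz)`, where the square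
root is the principal branch (continuous near `1` with `√1 = 1`). -/
def lam (a d Δ : ℂ) (z : ℂ) : ℂ :=
  (Δ * z ^ 2 + 1 -
      (Δ ^ 2 * z ^ 4 + 2 * Δ * (1 - 2 * (‖a‖ : ℂ) ^ 2) * z ^ 2 + 1) ^ ((1 : ℂ) / 2)) /
    (2 * d * z)

/-- `μ(z) = (dλ(z) - Δz)z/c`. -/
def mu (a c d Δ : ℂ) (z : ℂ) : ℂ := (d * lam a d Δ z - Δ * z) * z / c

lemma unitary_facts (a b c d : ℂ)
    (hU : !![a, b; c, d] ∈ Matrix.unitaryGroup (Fin 2) ℂ) :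
    Complex.normSq a + Complex.normSq c = 1 ∧ Complex.normSq c + Complex.normSq d = 1 ∧
      Complex.normSq (a*d - b*c) = 1 := by
  have h1 : star !![a, b; c, d] * !![a, b; c, d] = 1 := (Unitary.mem_iff.mp hU).1
  have h2 : !![a, b; c, d] * star !![a, b; c, d] = 1 := (Unitary.mem_iff.mp hU).2
  have e00 := congrFun (congrFun h1 0) 0
  have f11 := congrFun (congrFun h2 1) 1
  simp [Matrix.mul_apply, Fin.sum_univ_two, Matrix.one_apply, Matrix.conjTranspose_apply] at e00 f11
  refine ⟨?_, ?_, ?_⟩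
  · rw [mul_comm ((starRingEnd ℂ) a) a, mul_comm ((starRingEnd ℂ) c) c,
      Complex.mul_conj, Complex.mul_conj] at e00
    exact_mod_cast e00
  · rw [Complex.mul_conj, Complex.mul_conj] at f11
    exact_mod_cast f11
  · have hdet := congrArg Matrix.det h2
    rw [Matrix.det_mul, Matrix.star_eq_conjTranspose, Matrix.det_conjTranspose,
      Matrix.det_one, Matrix.det_fin_two_of] at hdet
    rw [Complex.star_def, Complex.mul_conj] at hdet
    exact_mod_cast hdet


set_option maxHeartbeats 1000000 in
lemma key_real (α γ t x y ρ s1 s2 : ℝ) (hα : 0 < α) (hγ : 0 < γ) (hαγ : α + γ = 1)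
    (hρpos : 0 < ρ) (hs2 : 0 < s2) (hs1 : 0 ≤ s1)
    (eρ : ρ^2 = x^2 + y^2) (e1 : s1^2 = (1-x)^2 + y^2) (e2 : s2^2 = (x-α)^2 + y^2)
    (e3 : ρ*s1 = t^2*s2) (h4 : ρ^2 < α*t^2) (h5 : t^2 < γ) : γ*ρ^2 < s2^2 := by
  by_contra hcon
  push_neg at hcon
  have hSt : s2^2 = γ*ρ^2 + α*s1^2 - α*γ := by
    have hγ1 : γ = 1 - α := by linarith
    subst hγ1
    linear_combination e2 - (1-α)*eρ - α*e1
  have hs1γ : s1^2 ≤ γ := by nlinarith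
  have ht2 : 0 < t^2 := by nlinarith
  -- step2 : ρ*s2 < α*s1
  have h1 : ρ^2 * s2 < α * t^2 * s2 := by nlinarith
  have h2 : α * t^2 * s2 = α * (ρ * s1) := by rw [e3]; ring
  have step2 : ρ*s2 < α*s1 := by nlinarith
  have hs1pos : 0 < s1 := by nlinarith
  -- step3 : ρ*s1 < γ*s2
  have step3 : ρ*s1 < γ*s2 := by rw [e3]; nlinarith
  -- squares
  have sq2 : ρ^2*s2^2 < α^2*s1^2 := by nlinarith [mul_pos hρpos hs2]
  have sq3 : ρ^2*s1^2 < γ^2*s2^2 := by nlinarith [mul_pos hρpos hs1pos]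
  -- ρ^2 < α
  have hpos : 0 < γ*ρ^2 + α*s1^2 := by positivity
  have hfac : (ρ^2-α)*(γ*ρ^2+α*s1^2) < 0 := by nlinarith
  have hρα : ρ^2 < α := by nlinarith
  -- s1^2*(ρ^2-α*γ^2) < γ^3*(ρ^2-α)
  have hkey : s1^2*(ρ^2-α*γ^2) < γ^3*(ρ^2-α) := by nlinarith
  rcases le_or_gt (α*γ^2) (ρ^2) with h | h
  · have h7 : 0 ≤ s1^2*(ρ^2-α*γ^2) := mul_nonneg (sq_nonneg s1) (by linarith)
    have h8 : γ^3*(ρ^2-α) < 0 := by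
      have : ρ^2 - α < 0 := by linarith
      have hγ3 : 0 < γ^3 := by positivity
      nlinarith
    linarith
  · have h9 : (γ - s1^2)*(ρ^2 - α*γ^2) ≤ 0 :=
      mul_nonpos_of_nonneg_of_nonpos (by linarith) (by linarith)
    have hγlt1 : γ < 1 := by linarith
    have h10 : γ*(ρ^2-α*γ^2) ≤ s1^2*(ρ^2-α*γ^2) := by nlinarith
    have e : γ*(ρ^2-α*γ^2) = γ*ρ^2 - α*γ^3 := by ring
    have e' : γ^3*(ρ^2-α) = γ^3*ρ^2 - α*γ^3 := by ring
    have h11 : γ*ρ^2 < γ^3*ρ^2 := by linarith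
    have h13 : 0 < (γ - γ^3) * ρ^2 :=
      mul_pos (by nlinarith [mul_pos hγ hγ]) (by positivity)
    have e'' : (γ-γ^3)*ρ^2 = γ*ρ^2 - γ^3*ρ^2 := by ring
    linarith

set_option maxHeartbeats 1000000 in
/-- **Bound on `μ(z)`.** -/
theorem mu_bound (a b c d : ℂ)
    (hU : !![a, b; c, d] ∈ Matrix.unitaryGroup (Fin 2) ℂ) (h0 : a * b * c * d ≠ 0)
    (r0 : ℝ) (hr0 : r0 ∈ Set.Ioo (0 : ℝ) 1)
    (hlam : ∀ z : ℂ, 0 < ‖z‖ → ‖z‖ < r0 →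
      ‖lam a d (a * d - b * c) z‖ < 1) :
    ∀ z : ℂ, 0 < ‖z‖ → ‖z‖ < min ‖c‖ r0 →
      ‖mu a c d (a * d - b * c) z‖ < 1 := by
  obtain ⟨n3, n2, ndet⟩ := unitary_facts a b c d hU
  have ha : a ≠ 0 := by intro h; apply h0; rw [h]; ring
  have hc : c ≠ 0 := by intro h; apply h0; rw [h]; ring
  have hd : d ≠ 0 := by intro h; apply h0; rw [h]; ring
  set Δ : ℂ := a * d - b * c with hΔdef
  set A : ℝ := ‖a‖ with hA
  set Cc : ℝ := ‖c‖ with hCc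
  have hApos : 0 < A := norm_pos_iff.mpr ha
  have hCpos : 0 < Cc := norm_pos_iff.mpr hc
  have habsd : ‖d‖ = A := by
    have : Complex.normSq d = Complex.normSq a := by linarith
    rw [hA, Complex.norm_def, Complex.norm_def, this]
  have habsΔ : ‖Δ‖ = 1 := by
    rw [Complex.norm_def, ndet, Real.sqrt_one]
  have hΔ0 : Δ ≠ 0 := by
    intro h; rw [h] at habsΔ; simp at habsΔ
  have hAC : A ^ 2 + Cc ^ 2 = 1 := by
    rw [hA, hCc, Complex.sq_norm, Complex.sq_norm]; exact n3
  intro z hz hzmin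
  rw [lt_min_iff] at hzmin
  obtain ⟨htc, htr⟩ := hzmin
  set t : ℝ := ‖z‖ with ht
  have hz0 : z ≠ 0 := norm_ne_zero_iff.mp (ne_of_gt hz)
  -- the square root
  set D : ℂ := Δ ^ 2 * z ^ 4 + 2 * Δ * (1 - 2 * (‖a‖ : ℂ) ^ 2) * z ^ 2 + 1 with hD
  set s : ℂ := D ^ ((1 : ℂ) / 2) with hs
  have hsq : s ^ 2 = D := by
    rcases eq_or_ne D 0 with h | h
    · rw [hs, h, Complex.zero_cpow (by norm_num : (1:ℂ)/2 ≠ 0)]; ring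
    · rw [hs, sq, ← Complex.cpow_add _ _ h]
      norm_num
  set w : ℂ := d * z * lam a d Δ z with hw
  have hlamdef : 2 * w = (Δ * z ^ 2 + 1) - s := by
    rw [hw, lam, ← hD, ← hs]
    field_simp
  have hquad : w ^ 2 - (Δ * z ^ 2 + 1) * w + (‖a‖ : ℂ) ^ 2 * Δ * z ^ 2 = 0 := by
    have h1 : (2 * w - (Δ * z ^ 2 + 1)) ^ 2 = D := by
      rw [show 2 * w - (Δ * z ^ 2 + 1) = -s by linear_combination hlamdef, neg_sq, hsq]
    rw [hD] at h1
    linear_combination h1 / 4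
  have hrel1 : w * (w - 1) = Δ * z ^ 2 * (w - (‖a‖ : ℂ) ^ 2) := by
    linear_combination hquad
  have hACc : ((A : ℂ)) ^ 2 + ((Cc : ℂ)) ^ 2 = 1 := by exact_mod_cast hAC
  have hrel2 : (w - Δ * z ^ 2) * (w - (‖a‖ : ℂ) ^ 2) = ((Cc : ℂ)) ^ 2 * w := by
    rw [← hA]
    linear_combination hquad - w * hACc
  have hw0 : w ≠ 0 := by
    intro h
    rw [h] at hrel1
    simp only [zero_mul, zero_sub] at hrel1
    have : Δ * z ^ 2 * (‖a‖ : ℂ) ^ 2 = 0 := by linear_combination hrel1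
    have hA0 : ((‖a‖ : ℝ) : ℂ) ≠ 0 := by
      exact_mod_cast norm_ne_zero_iff.mpr ha
    exact (mul_ne_zero (mul_ne_zero hΔ0 (pow_ne_zero 2 hz0)) (pow_ne_zero 2 hA0)) this
  -- real quantities
  set x : ℝ := w.re with hx
  set y : ℝ := w.im with hy
  set ρ : ℝ := ‖w‖ with hρ
  set s1 : ℝ := ‖w - 1‖ with hs1
  set s2 : ℝ := ‖w - (‖a‖ : ℂ) ^ 2‖ with hs2v
  have hρpos : 0 < ρ := norm_pos_iff.mpr hw0
  have hcoe : ((‖a‖ : ℂ)) ^ 2 = ((A ^ 2 : ℝ) : ℂ) := by rw [← hA]; push_cast; ring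
  have eρ : ρ ^ 2 = x ^ 2 + y ^ 2 := by
    rw [hρ, Complex.sq_norm, Complex.normSq_apply, hx, hy]; ring
  have e1 : s1 ^ 2 = (1 - x) ^ 2 + y ^ 2 := by
    rw [hs1, Complex.sq_norm, Complex.normSq_apply, Complex.sub_re, Complex.sub_im]
    simp [← hx, ← hy]; ring
  have e2 : s2 ^ 2 = (x - A ^ 2) ^ 2 + y ^ 2 := by
    rw [hs2v, hcoe, Complex.sq_norm, Complex.normSq_apply, Complex.sub_re, Complex.sub_im,
      Complex.ofReal_re, Complex.ofReal_im]
    simp [← hx, ← hy]; ring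
  have e3 : ρ * s1 = t ^ 2 * s2 := by
    have habs := congrArg (‖·‖) hrel1
    simp only [norm_mul, norm_pow] at habs
    rw [hρ, hs1, ht, hs2v, habs, habsΔ]
    ring
  have h4 : ρ ^ 2 < A ^ 2 * t ^ 2 := by
    have hlt : ‖lam a d Δ z‖ < 1 := hlam z hz htr
    have hρeq : ρ = A * t * ‖lam a d Δ z‖ := by
      rw [hρ, hw, norm_mul, norm_mul, habsd, ht]
    have hAt : 0 < A * t := mul_pos hApos hz
    have : ρ < A * t := by
      rw [hρeq]; nlinarith [norm_nonneg (lam a d Δ z)]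
    nlinarith [norm_nonneg w, hρpos]
  have h5 : t ^ 2 < Cc ^ 2 := by nlinarith
  -- s2 > 0
  have habs2 : ‖w - Δ * z ^ 2‖ * s2 = Cc ^ 2 * ρ := by
    have := congrArg (‖·‖) hrel2
    rw [norm_mul, norm_mul, norm_pow, Complex.norm_real, Real.norm_of_nonneg hCpos.le] at this
    rw [hs2v, hρ, this]
  have hs2pos : 0 < s2 := by
    rcases (norm_nonneg (w - (‖a‖ : ℂ) ^ 2)).lt_or_eq with h | h
    · exact h
    · exfalso
      rw [← hs2v] at h
      rw [← h, mul_zero] at habs2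
      nlinarith [mul_pos (mul_pos hCpos hCpos) hρpos]
  -- apply the real lemma
  have hkey : Cc ^ 2 * ρ ^ 2 < s2 ^ 2 :=
    key_real (A ^ 2) (Cc ^ 2) t x y ρ s1 s2 (by positivity) (by positivity) hAC
      hρpos hs2pos (norm_nonneg _) eρ e1 e2 e3 h4 h5
  have hCρ : Cc * ρ < s2 := by
    have h1 : (Cc * ρ) ^ 2 < s2 ^ 2 := by nlinarith
    nlinarith [mul_pos hCpos hρpos]
  have hfin : ‖w - Δ * z ^ 2‖ < Cc := by
    have h1 : ‖w - Δ * z ^ 2‖ * s2 < Cc * s2 := by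
      rw [habs2]
      calc Cc ^ 2 * ρ = Cc * (Cc * ρ) := by ring
        _ < Cc * s2 := by exact (mul_lt_mul_iff_right₀ hCpos).mpr hCρ
    exact lt_of_mul_lt_mul_right (by linarith) (le_of_lt hs2pos)
  have hmu : mu a c d Δ z = (w - Δ * z ^ 2) / c := by
    rw [mu, hw]; ring_nf
  rw [hmu, norm_div, ← hCc]
  rw [div_lt_one hCpos]
  exact hfin


end QW
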